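/- The canonical closure has the same Fine interior as the original polytope: for a full-dimensional lattice polytope Δ with dim F(Δ) = dim Δ, F(C(Δ)) = F(Δ). -/

import Mathlib

noncomputable section

def pairing {n : ℕ} (x : Fin n → ℝ) (ν : Fin n → ℤ) : ℝ := ∑ i, x i * (ν i : ℝ)

def IsLatticePoint {n : ℕ} (x : Fin n → ℝ) : Prop := ∀ i, ∃ z : ℤ, x i = (z : ℝ)

/-- `ord_P(ν) := inf_{x ∈ P} ⟨x, ν⟩`. -/
def ordS {n : ℕ} (P : Set (Fin n → ℝ)) (ν : Fin n → ℤ) : ℝ :=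
  sInf ((fun m => pairing m ν) '' P)

/-- The Fine interior `F(Δ) := {x | ⟨x,ν⟩ ≥ ord_Δ(ν)+1 ∀ ν ∈ N\{0}}`. -/
def FineInterior {n : ℕ} (Δ : Set (Fin n → ℝ)) : Set (Fin n → ℝ) :=
  { x | ∀ ν : Fin n → ℤ, ν ≠ 0 → ordS Δ ν + 1 ≤ pairing x ν }

/-- The support `S_F(Δ) := {ν ∈ N\{0} : ord_{F(Δ)}(ν) = ord_Δ(ν)+1}`. -/
def SuppF {n : ℕ} (Δ : Set (Fin n → ℝ)) : Set (Fin n → ℤ) :=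
  { ν | ν ≠ 0 ∧ ordS (FineInterior Δ) ν = ordS Δ ν + 1 }

/-- The canonical closure `C(Δ) := {x | ⟨x,ν⟩ ≥ ord_Δ(ν) ∀ ν ∈ S_F(Δ)}`. -/
def CanClosure {n : ℕ} (Δ : Set (Fin n → ℝ)) : Set (Fin n → ℝ) :=
  { x | ∀ ν ∈ SuppF Δ, ordS Δ ν ≤ pairing x ν }

namespace FCaux

open Filter Topology

variable {n : ℕ}

/-- real pairing -/
def rpair (x u : Fin n → ℝ) : ℝ := ∑ i, x i * u i

lemma pairing_eq_rpair (x : Fin n → ℝ) (ν : Fin n → ℤ) :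
    pairing x ν = rpair x (fun i => (ν i : ℝ)) := rfl

def L1 (u : Fin n → ℝ) : ℝ := ∑ i, |u i|

lemma L1_nonneg (u : Fin n → ℝ) : 0 ≤ L1 u :=
  Finset.sum_nonneg fun i _ => abs_nonneg _

lemma abs_le_L1 (u : Fin n → ℝ) (i : Fin n) : |u i| ≤ L1 u :=
  Finset.single_le_sum (fun j _ => abs_nonneg (u j)) (Finset.mem_univ i)

lemma one_le_L1_int {ν : Fin n → ℤ} (hν : ν ≠ 0) : 1 ≤ L1 (fun i => (ν i : ℝ)) := by
  obtain ⟨i, hi⟩ := Function.ne_iff.mp hν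
  have h1 : (1 : ℝ) ≤ |(ν i : ℝ)| := by
    have hne : ν i ≠ 0 := hi
    have : (1 : ℤ) ≤ |ν i| := Int.one_le_abs hne
    calc (1:ℝ) = ((1:ℤ):ℝ) := by norm_num
    _ ≤ (|ν i| : ℝ) := by exact_mod_cast this
    _ = |(ν i : ℝ)| := by push_cast; ring
  exact h1.trans (abs_le_L1 (fun i => (ν i : ℝ)) i)

lemma abs_rpair_le (x u : Fin n → ℝ) : |rpair x u| ≤ ‖x‖ * L1 u := by
  calc |rpair x u| ≤ ∑ i, |x i * u i| := Finset.abs_sum_le_sum_abs _ _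
  _ ≤ ∑ i, ‖x‖ * |u i| := by
      refine Finset.sum_le_sum fun i _ => ?_
      rw [abs_mul]
      have hx : |x i| ≤ ‖x‖ := by
        have := norm_le_pi_norm x i
        simpa using this
      exact mul_le_mul_of_nonneg_right hx (abs_nonneg _) |>.trans
        (by exact le_of_eq rfl)
  _ = ‖x‖ * L1 u := by rw [L1, Finset.mul_sum]

lemma rpair_isLinearMap (u : Fin n → ℝ) : IsLinearMap ℝ (fun x : Fin n → ℝ => rpair x u) := by
  constructor
  · intro a b; simp [rpair, add_mul, Finset.sum_add_distrib]
  · intro c a; simp [rpair, Finset.mul_sum, mul_assoc]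

lemma continuous_rpair_left (u : Fin n → ℝ) : Continuous (fun x : Fin n → ℝ => rpair x u) := by
  unfold rpair
  exact continuous_finset_sum _ fun i _ => (continuous_apply i).mul continuous_const

lemma continuous_rpair2 : Continuous (fun p : (Fin n → ℝ) × (Fin n → ℝ) => rpair p.1 p.2) := by
  unfold rpair
  exact continuous_finset_sum _ fun i _ =>
    ((continuous_apply i).comp continuous_fst).mul ((continuous_apply i).comp continuous_snd)

lemma continuous_L1 : Continuous (L1 (n := n)) := by
  unfold L1
  exact continuous_finset_sum _ fun i _ => (continuous_apply i).abs

lemma rpair_sub_right (x a b : Fin n → ℝ) : rpair x a - rpair x b = rpair x (a - b) := by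
  simp [rpair, mul_sub, Finset.sum_sub_distrib]

lemma rpair_smul_right (x : Fin n → ℝ) (c : ℝ) (u : Fin n → ℝ) :
    rpair x (c • u) = c * rpair x u := by
  simp only [rpair, Pi.smul_apply, smul_eq_mul, Finset.mul_sum]
  exact Finset.sum_congr rfl fun i _ => by ring

lemma rpair_seg (x₀ x u : Fin n → ℝ) (t : ℝ) :
    rpair (x₀ + t • (x - x₀)) u = rpair x₀ u + t * (rpair x u - rpair x₀ u) := by
  simp only [rpair, Pi.add_apply, Pi.smul_apply, Pi.sub_apply, smul_eq_mul]
  rw [mul_sub, Finset.mul_sum, Finset.mul_sum, ← Finset.sum_sub_distrib, ← Finset.sum_add_distrib]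
  exact Finset.sum_congr rfl fun i _ => by ring

lemma L1_smul (c : ℝ) (hc : 0 ≤ c) (u : Fin n → ℝ) : L1 (c • u) = c * L1 u := by
  simp [L1, abs_mul, abs_of_nonneg hc, Finset.mul_sum]

/-- FineInterior is closed. -/
lemma isClosed_fine (Δ : Set (Fin n → ℝ)) : IsClosed (FineInterior Δ) := by
  have : FineInterior Δ = ⋂ (ν : Fin n → ℤ) (_ : ν ≠ 0), {x | ordS Δ ν + 1 ≤ pairing x ν} := by
    ext x; simp [FineInterior]
  rw [this]
  exact isClosed_iInter fun ν => isClosed_iInter fun _ =>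
    isClosed_le continuous_const (by rw [show (fun x => pairing x ν) = fun x => rpair x (fun i => (ν i:ℝ)) from rfl]; exact continuous_rpair_left _)

section VStuff

variable (V : Finset (Fin n → ℝ)) (hVne : V.Nonempty)

/-- min of the pairing over the vertex set -/
def mfun (u : Fin n → ℝ) : ℝ := V.inf' hVne fun v => rpair v u

/-- coordinate bound for vertices -/
def MV : ℝ := V.sup' hVne fun v => ‖v‖

lemma MV_nonneg : 0 ≤ MV V hVne := by
  obtain ⟨v, hv⟩ := hVne
  exact (norm_nonneg v).trans (Finset.le_sup' _ hv)

lemma mfun_le {v : Fin n → ℝ} (hv : v ∈ V) (u : Fin n → ℝ) :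
    mfun V hVne u ≤ rpair v u := Finset.inf'_le _ hv

lemma exists_mfun (u : Fin n → ℝ) : ∃ v ∈ V, mfun V hVne u = rpair v u := by
  obtain ⟨v, hv, h⟩ := Finset.exists_mem_eq_inf' hVne fun v => rpair v u
  exact ⟨v, hv, h⟩

lemma le_rpair_of_mem_hull {x : Fin n → ℝ} (hx : x ∈ convexHull ℝ (V : Set (Fin n → ℝ)))
    (u : Fin n → ℝ) : mfun V hVne u ≤ rpair x u := by
  have hsub : (V : Set (Fin n → ℝ)) ⊆ {y | mfun V hVne u ≤ rpair y u} := by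
    intro v hv; exact mfun_le V hVne (by exact_mod_cast hv) u
  have hconv : Convex ℝ {y : Fin n → ℝ | mfun V hVne u ≤ rpair y u} :=
    convex_halfSpace_ge (rpair_isLinearMap u) _
  exact convexHull_min hsub hconv hx

lemma mfun_smul (c : ℝ) (hc : 0 ≤ c) (u : Fin n → ℝ) :
    mfun V hVne (c • u) = c * mfun V hVne u := by
  unfold mfun at *
  have hr : ∀ v : Fin n → ℝ, rpair v (c • u) = c * rpair v u := fun v => rpair_smul_right v c u
  apply le_antisymm
  · obtain ⟨v, hv, hveq⟩ := exists_mfun V hVne u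
    calc V.inf' hVne (fun v => rpair v (c • u)) ≤ rpair v (c • u) := Finset.inf'_le _ hv
    _ = c * rpair v u := hr v
    _ = c * V.inf' hVne (fun v => rpair v u) := by rw [← hveq, mfun]
  · apply Finset.le_inf' hVne
    intro v hv
    rw [hr v]
    exact mul_le_mul_of_nonneg_left (mfun_le V hVne hv u) hc

lemma mfun_sub_le (a b : Fin n → ℝ) :
    mfun V hVne a ≤ mfun V hVne b + MV V hVne * L1 (a - b) := by
  obtain ⟨v, hv, hveq⟩ := exists_mfun V hVne b
  have h1 : mfun V hVne a ≤ rpair v a := mfun_le V hVne hv a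
  have h2 : rpair v a - rpair v b ≤ |rpair v (a - b)| := by
    rw [rpair_sub_right]; exact le_abs_self _
  have h3 : |rpair v (a - b)| ≤ ‖v‖ * L1 (a - b) := abs_rpair_le v (a - b)
  have h4 : ‖v‖ ≤ MV V hVne := Finset.le_sup' _ hv
  have h5 : ‖v‖ * L1 (a - b) ≤ MV V hVne * L1 (a - b) :=
    mul_le_mul_of_nonneg_right h4 (L1_nonneg _)
  rw [hveq]
  linarith

lemma ordS_hull (ν : Fin n → ℤ) :
    ordS (convexHull ℝ (V : Set (Fin n → ℝ))) ν = mfun V hVne (fun i => (ν i : ℝ)) := by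
  apply IsLeast.csInf_eq
  constructor
  · obtain ⟨v, hv, hveq⟩ := exists_mfun V hVne (fun i => (ν i : ℝ))
    refine ⟨v, subset_convexHull ℝ _ (by exact_mod_cast hv), ?_⟩
    show pairing v ν = _
    rw [pairing_eq_rpair, ← hveq]
  · rintro y ⟨z, hz, rfl⟩
    show _ ≤ pairing z ν
    rw [pairing_eq_rpair]
    exact le_rpair_of_mem_hull V hVne hz _

end VStuff

lemma rpair_sub_left (a b u : Fin n → ℝ) : rpair (a - b) u = rpair a u - rpair b u := by
  simp only [rpair, Pi.sub_apply, sub_mul]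
  exact Finset.sum_sub_distrib _ _

lemma rpair_smul_left (c : ℝ) (a u : Fin n → ℝ) : rpair (c • a) u = c * rpair a u := by
  simp only [rpair, Pi.smul_apply, smul_eq_mul, Finset.mul_sum]
  exact Finset.sum_congr rfl fun i _ => by ring

lemma L1_neg (u : Fin n → ℝ) : L1 (-u) = L1 u := by simp [L1]

/-- margin lemma: the center of a ball inside a halfspace-cut set has margin. -/
lemma margin {x₀ : Fin n → ℝ} {ρ : ℝ} (hρ : 0 < ρ) {S : Set (Fin n → ℝ)}
    (hball : Metric.closedBall x₀ ρ ⊆ S) {ν : Fin n → ℤ} {c : ℝ}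
    (h : ∀ y ∈ S, c ≤ pairing y ν) :
    c + ρ * L1 (fun i => (ν i : ℝ)) ≤ pairing x₀ ν := by
  set νr : Fin n → ℝ := fun i => (ν i : ℝ) with hνr
  set sgn : Fin n → ℝ := fun i => if 0 ≤ νr i then 1 else -1 with hsgn
  have habs : ∀ i, |sgn i| = 1 := by
    intro i; by_cases h0 : 0 ≤ νr i <;> simp [hsgn, h0]
  have hy : x₀ - ρ • sgn ∈ Metric.closedBall x₀ ρ := by
    rw [mem_closedBall_iff_norm]
    have he : x₀ - ρ • sgn - x₀ = -(ρ • sgn) := by abel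
    rw [he, norm_neg, pi_norm_le_iff_of_nonneg hρ.le]
    intro i
    simp only [Pi.smul_apply, smul_eq_mul, Real.norm_eq_abs, abs_mul, abs_of_nonneg hρ.le]
    rw [habs i, mul_one]
  have h2 := h _ (hball hy)
  have hsgnν : rpair sgn νr = L1 νr := by
    unfold rpair L1
    refine Finset.sum_congr rfl fun i _ => ?_
    by_cases h0 : 0 ≤ νr i
    · simp [hsgn, h0, abs_of_nonneg h0]
    · push_neg at h0
      simp [hsgn, not_le.mpr h0, abs_of_neg h0]
  have h3 : pairing (x₀ - ρ • sgn) ν = pairing x₀ ν - ρ * L1 νr := by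
    rw [pairing_eq_rpair, pairing_eq_rpair, ← hνr, rpair_sub_left, rpair_smul_left, hsgnν]
  rw [h3] at h2
  linarith

/-- simultaneous Dirichlet approximation, weak form -/
lemma dirichlet (u : Fin n → ℝ) {ε : ℝ} (hε : 0 < ε) :
    ∃ (N : ℕ) (ν : Fin n → ℤ), 0 < N ∧ ∀ i, |(N : ℝ) * u i - (ν i : ℝ)| ≤ ε := by
  obtain ⟨M, hM⟩ := exists_nat_gt (1 / ε)
  have hM0 : 0 < M := by
    have h0 : (0:ℝ) < 1/ε := by positivity
    have : (0:ℝ) < (M:ℝ) := h0.trans hM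
    exact_mod_cast this
  have hM0' : (0:ℝ) < (M:ℝ) := by exact_mod_cast hM0
  have hMε : 1 / (M:ℝ) < ε := by
    rw [div_lt_iff₀ hM0']
    rw [div_lt_iff₀ hε] at hM
    linarith [hM]
  have hfr : ∀ (a : ℝ), (⌊Int.fract a * M⌋).toNat < M := by
    intro a
    have h1 : (0:ℤ) ≤ ⌊Int.fract a * M⌋ := Int.floor_nonneg.mpr (mul_nonneg (Int.fract_nonneg a) hM0'.le)
    have h2 : ⌊Int.fract a * (M:ℝ)⌋ < (M:ℤ) := by
      rw [Int.floor_lt]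
      push_cast
      calc Int.fract a * M < 1 * M :=
        mul_lt_mul_of_pos_right (Int.fract_lt_one a) hM0'
      _ = M := one_mul _
    omega
  have main : ∀ k₁ k₂ : ℕ, k₁ < k₂ →
      (∀ i : Fin n, (⌊Int.fract ((k₁:ℝ) * u i) * M⌋) = (⌊Int.fract ((k₂:ℝ) * u i) * M⌋)) →
      ∃ (N : ℕ) (ν : Fin n → ℤ), 0 < N ∧ ∀ i, |(N : ℝ) * u i - (ν i : ℝ)| ≤ ε := by
    intro k₁ k₂ hlt hfeq
    refine ⟨k₂ - k₁, fun i => ⌊(k₂:ℝ) * u i⌋ - ⌊(k₁:ℝ) * u i⌋, by omega, fun i => ?_⟩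
    set a := Int.fract ((k₁:ℝ) * u i) with ha
    set b := Int.fract ((k₂:ℝ) * u i) with hb
    have hab : |b - a| < 1 / M := by
      have hj := hfeq i
      have hj1 : ((⌊a * M⌋ : ℤ) : ℝ) ≤ a * M := Int.floor_le _
      have hj2 : a * M < (⌊a * M⌋ : ℤ) + 1 := Int.lt_floor_add_one _
      have hj3 : ((⌊a * M⌋ : ℤ) : ℝ) ≤ b * M := by rw [hj]; exact Int.floor_le _
      have hj4 : b * M < (⌊a * M⌋ : ℤ) + 1 := by rw [hj]; exact Int.lt_floor_add_one _
      have habs : |b * M - a * M| < 1 := abs_sub_lt_iff.mpr ⟨by linarith, by linarith⟩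
      rw [lt_div_iff₀ hM0']
      calc |b - a| * (M:ℝ) = |b - a| * |(M:ℝ)| := by rw [abs_of_pos hM0']
      _ = |(b - a) * M| := (abs_mul _ _).symm
      _ = |b * M - a * M| := by rw [sub_mul]
      _ < 1 := habs
    have hval : ((k₂ - k₁ : ℕ) : ℝ) * u i - ((⌊(k₂:ℝ)*u i⌋ - ⌊(k₁:ℝ)*u i⌋ : ℤ) : ℝ) = b - a := by
      have hbb : b = (k₂:ℝ) * u i - (⌊(k₂:ℝ)*u i⌋ : ℤ) := (Int.self_sub_floor _).symm
      have haa : a = (k₁:ℝ) * u i - (⌊(k₁:ℝ)*u i⌋ : ℤ) := (Int.self_sub_floor _).symm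
      have hcast : ((k₂ - k₁ : ℕ) : ℝ) = (k₂:ℝ) - (k₁:ℝ) := by
        rw [Nat.cast_sub hlt.le]
      rw [hbb, haa, hcast]
      push_cast
      ring
    rw [hval]
    exact hab.le.trans hMε.le
  set f : ℕ → (Fin n → Fin M) := fun k i => ⟨(⌊Int.fract ((k:ℝ) * u i) * M⌋).toNat, hfr _⟩ with hf
  have hcard : (Finset.univ : Finset (Fin n → Fin M)).card < (Finset.range (M^n + 1)).card := by
    simp [Finset.card_univ]
  obtain ⟨k₁, _, k₂, _, hne, hfeq⟩ :=
    Finset.exists_ne_map_eq_of_card_lt_of_maps_to hcard (fun a _ => Finset.mem_univ (f a))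
  have hcoord : ∀ k₁ k₂ : ℕ, f k₁ = f k₂ →
      ∀ i : Fin n, (⌊Int.fract ((k₁:ℝ) * u i) * M⌋) = (⌊Int.fract ((k₂:ℝ) * u i) * M⌋) := by
    intro k₁ k₂ hkeq i
    have h1 : (⌊Int.fract ((k₁:ℝ) * u i) * M⌋).toNat = (⌊Int.fract ((k₂:ℝ) * u i) * M⌋).toNat := by
      have := congrFun hkeq i
      exact congrArg Fin.val this
    have n1 : (0:ℤ) ≤ ⌊Int.fract ((k₁:ℝ) * u i) * M⌋ :=
      Int.floor_nonneg.mpr (mul_nonneg (Int.fract_nonneg _) hM0'.le)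
    have n2 : (0:ℤ) ≤ ⌊Int.fract ((k₂:ℝ) * u i) * M⌋ :=
      Int.floor_nonneg.mpr (mul_nonneg (Int.fract_nonneg _) hM0'.le)
    omega
  rcases hne.lt_or_gt with hlt | hlt
  · exact main k₁ k₂ hlt (hcoord k₁ k₂ hfeq)
  · exact main k₂ k₁ hlt (hcoord k₂ k₁ hfeq.symm)

/-- strictness: a point of the Fine interior is strictly inside Δ in every real direction -/
lemma strict (V : Finset (Fin n → ℝ)) (hVne : V.Nonempty) {x : Fin n → ℝ}
    (hx : x ∈ FineInterior (convexHull ℝ (V : Set (Fin n → ℝ))))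
    {u : Fin n → ℝ} (hu : u ≠ 0) : mfun V hVne u < rpair x u := by
  obtain ⟨i₀, hi₀⟩ := Function.ne_iff.mp hu
  have hi₀' : u i₀ ≠ 0 := by simpa using hi₀
  set C : ℝ := (‖x‖ + MV V hVne + 1) * n + 1 with hC
  have hMV := MV_nonneg V hVne
  have hCpos : 0 < C := by positivity
  set ε : ℝ := min (|u i₀| / 2) (1 / (2 * C)) with hε
  have hεpos : 0 < ε := lt_min (by positivity) (by positivity)
  obtain ⟨N, ν, hN, happ⟩ := dirichlet u hεpos
  have hNpos : (0:ℝ) < (N:ℝ) := by exact_mod_cast hN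
  set νr : Fin n → ℝ := fun i => (ν i : ℝ) with hνrdef
  have hν0 : ν ≠ 0 := by
    intro h
    have h0 := happ i₀
    rw [h] at h0
    simp only [Pi.zero_apply, Int.cast_zero, sub_zero, abs_mul, Nat.abs_cast] at h0
    have h1 : |u i₀| ≤ (N:ℝ) * |u i₀| := by
      have : (1:ℝ) ≤ (N:ℝ) := by exact_mod_cast hN
      nlinarith [abs_nonneg (u i₀)]
    have h2 : ε ≤ |u i₀|/2 := min_le_left _ _
    have h3 : 0 < |u i₀| := abs_pos.mpr hi₀'
    linarith
  have hxν : mfun V hVne νr + 1 ≤ rpair x νr := by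
    have h := hx ν hν0
    rwa [ordS_hull V hVne, pairing_eq_rpair] at h
  have hL : L1 (νr - (N:ℝ) • u) ≤ n * ε := by
    unfold L1
    have hpt : ∀ i, |(νr - (N:ℝ) • u) i| ≤ ε := by
      intro i
      simp only [Pi.sub_apply, Pi.smul_apply, smul_eq_mul]
      rw [abs_sub_comm]
      exact happ i
    calc (∑ i, |(νr - (N:ℝ) • u) i|) ≤ ∑ _i : Fin n, ε := Finset.sum_le_sum fun i _ => hpt i
    _ = n * ε := by simp [Finset.sum_const, Finset.card_univ, mul_comm]
  have h1 : |rpair x νr - (N:ℝ) * rpair x u| ≤ ‖x‖ * (n * ε) := by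
    rw [← rpair_smul_right, rpair_sub_right]
    exact (abs_rpair_le _ _).trans (mul_le_mul_of_nonneg_left hL (norm_nonneg x))
  have h2 : (N:ℝ) * mfun V hVne u ≤ mfun V hVne νr + MV V hVne * (n * ε) := by
    obtain ⟨v, hv, hveq⟩ := exists_mfun V hVne νr
    have ha : (N:ℝ) * mfun V hVne u = mfun V hVne ((N:ℝ) • u) :=
      (mfun_smul V hVne _ hNpos.le u).symm
    have hb : mfun V hVne ((N:ℝ) • u) ≤ rpair v ((N:ℝ) • u) := mfun_le V hVne hv _
    have hc : rpair v ((N:ℝ) • u) - rpair v νr ≤ ‖v‖ * L1 ((N:ℝ) • u - νr) := by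
      rw [rpair_sub_right]
      exact (le_abs_self _).trans (abs_rpair_le _ _)
    have hL' : L1 ((N:ℝ) • u - νr) ≤ n * ε := by
      rw [show (N:ℝ) • u - νr = -(νr - (N:ℝ) • u) by abel, L1_neg]
      exact hL
    have hd : ‖v‖ * L1 ((N:ℝ) • u - νr) ≤ MV V hVne * (n * ε) :=
      mul_le_mul (Finset.le_sup' _ hv) hL' (L1_nonneg _) hMV
    linarith [hveq ▸ (le_refl (mfun V hVne νr))]
  have habsle := (abs_le.mp h1).2
  have hεC : C * ε ≤ 1/2 := by
    have : ε ≤ 1 / (2*C) := min_le_right _ _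
    calc C * ε ≤ C * (1/(2*C)) := mul_le_mul_of_nonneg_left this hCpos.le
    _ = 1/2 := by
      rw [mul_one_div, div_eq_div_iff (by positivity) (by norm_num : (2:ℝ) ≠ 0)]
      ring
  have hn' : (‖x‖ + MV V hVne) * (n * ε) ≤ C * ε := by
    have hnn : (0:ℝ) ≤ (n:ℝ) := Nat.cast_nonneg n
    have hxn : (0:ℝ) ≤ ‖x‖ := norm_nonneg x
    nlinarith [hεpos.le]
  have hfin : (N:ℝ) * mfun V hVne u + 1/2 ≤ (N:ℝ) * rpair x u := by
    nlinarith [habsle, h2, hxν, hεC, hn']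
  nlinarith [hfin, hNpos, mul_le_mul_of_nonneg_left (le_refl (rpair x u)) hNpos.le]

set_option maxHeartbeats 2000000 in
/-- KEY LEMMA: the support constraints already cut out the Fine interior. -/
lemma key (V : Finset (Fin n → ℝ)) (hVne : V.Nonempty)
    (x₀ : Fin n → ℝ) (ρ : ℝ) (hρ : 0 < ρ)
    (hball : Metric.closedBall x₀ ρ ⊆ FineInterior (convexHull ℝ (V : Set (Fin n → ℝ))))
    {x : Fin n → ℝ}
    (hx : ∀ ν ∈ SuppF (convexHull ℝ (V : Set (Fin n → ℝ))),
      ordS (convexHull ℝ (V : Set (Fin n → ℝ))) ν + 1 ≤ pairing x ν) :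
    x ∈ FineInterior (convexHull ℝ (V : Set (Fin n → ℝ))) := by
  by_contra hxF
  have hx₀ : x₀ ∈ FineInterior (convexHull ℝ (V : Set (Fin n → ℝ))) :=
    hball (Metric.mem_closedBall_self hρ.le)
  set γ : ℝ → (Fin n → ℝ) := fun t => x₀ + t • (x - x₀) with hγ
  have hγcont : Continuous γ :=
    continuous_const.add (continuous_id.smul continuous_const)
  have hγ0 : γ 0 = x₀ := by rw [hγ]; simp
  have hγ1 : γ 1 = x := by rw [hγ]; simp
  set T : Set ℝ := Set.Icc (0:ℝ) 1 ∩ γ ⁻¹' (FineInterior (convexHull ℝ (V : Set (Fin n → ℝ)))) with hT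
  have hTclosed : IsClosed T := isClosed_Icc.inter ((isClosed_fine _).preimage hγcont)
  have h0T : (0:ℝ) ∈ T := ⟨⟨le_refl 0, zero_le_one⟩, by rw [Set.mem_preimage, hγ0]; exact hx₀⟩
  have hbddT : BddAbove T := ⟨1, fun t ht => ht.1.2⟩
  set ts : ℝ := sSup T with hts
  have htsT : ts ∈ T := hTclosed.csSup_mem ⟨0, h0T⟩ hbddT
  have hts0 : 0 ≤ ts := htsT.1.1
  have hts1' : ts ≤ 1 := htsT.1.2
  have hzF : γ ts ∈ FineInterior (convexHull ℝ (V : Set (Fin n → ℝ))) := htsT.2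
  have hts1 : ts < 1 := by
    rcases lt_or_eq_of_le hts1' with h|h
    · exact h
    · exact absurd (by rw [← hγ1, ← h]; exact hzF) hxF
  set tk : ℕ → ℝ := fun k => ts + (1 - ts)/((k:ℝ)+1) with htk
  have htkgt : ∀ k, ts < tk k := by
    intro k
    have h1 : 0 < (1 - ts)/((k:ℝ)+1) := div_pos (by linarith) (by positivity)
    rw [htk]; dsimp only; linarith
  have htkle : ∀ k, tk k ≤ 1 := by
    intro k
    have h1 : (1 - ts)/((k:ℝ)+1) ≤ (1 - ts) := by
      apply div_le_self (by linarith)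
      have : (0:ℝ) ≤ (k:ℝ) := Nat.cast_nonneg k
      linarith
    rw [htk]; dsimp only; linarith
  have htknotF : ∀ k, γ (tk k) ∉ FineInterior (convexHull ℝ (V : Set (Fin n → ℝ))) := by
    intro k hmem
    have hmT : tk k ∈ T := ⟨⟨by linarith [htkgt k, hts0], htkle k⟩, hmem⟩
    have := le_csSup hbddT hmT
    linarith [htkgt k]
  have hexists : ∀ k, ∃ ν : Fin n → ℤ, ν ≠ 0 ∧
      pairing (γ (tk k)) ν < mfun V hVne (fun i => ((ν i):ℝ)) + 1 := by
    intro k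
    by_contra hcon
    push_neg at hcon
    refine htknotF k (fun ν hν => ?_)
    rw [ordS_hull V hVne]
    exact hcon ν hν
  choose ν hν0 hνlt using hexists
  have hFconstr : ∀ (μ : Fin n → ℤ), μ ≠ 0 →
      ∀ y ∈ FineInterior (convexHull ℝ (V : Set (Fin n → ℝ))),
      mfun V hVne (fun i => ((μ i):ℝ)) + 1 ≤ pairing y μ := by
    intro μ hμ y hy
    have h := hy μ hμ
    rwa [ordS_hull V hVne] at h
  have hmarg : ∀ k, mfun V hVne (fun i => (((ν k) i):ℝ)) + 1 + ρ * L1 (fun i => (((ν k) i):ℝ))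
      ≤ pairing x₀ (ν k) := by
    intro k
    exact margin hρ hball (hFconstr (ν k) (hν0 k))
  have hseg : ∀ (t : ℝ) (μ : Fin n → ℤ),
      pairing (γ t) μ = pairing x₀ μ + t * (pairing x μ - pairing x₀ μ) := by
    intro t μ
    rw [pairing_eq_rpair, pairing_eq_rpair, pairing_eq_rpair, hγ]
    exact rpair_seg x₀ x _ t
  have hL1k : ∀ k, 1 ≤ L1 (fun i => (((ν k) i):ℝ)) := fun k => one_le_L1_int (hν0 k)
  have htkpos : ∀ k, 0 < tk k := fun k => lt_of_le_of_lt hts0 (htkgt k)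
  have hdneg : ∀ k, pairing x (ν k) - pairing x₀ (ν k) < 0 := by
    intro k
    have h1 := hmarg k
    have h2 := hνlt k
    rw [hseg (tk k) (ν k)] at h2
    have h3 := htkpos k
    have h4 := hL1k k
    nlinarith
  have hxk : ∀ k, pairing x (ν k) < mfun V hVne (fun i => (((ν k) i):ℝ)) + 1 := by
    intro k
    have h2 := hνlt k
    rw [hseg (tk k) (ν k)] at h2
    have h6 := htkle k
    have h7 := hdneg k
    nlinarith
  have hnotS : ∀ k,
      ordS (FineInterior (convexHull ℝ (V : Set (Fin n → ℝ)))) (ν k)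
        ≠ mfun V hVne (fun i => (((ν k) i):ℝ)) + 1 := by
    intro k heq
    have hmem : ν k ∈ SuppF (convexHull ℝ (V : Set (Fin n → ℝ))) := by
      refine ⟨hν0 k, ?_⟩
      rw [ordS_hull V hVne]
      exact heq
    have h := hx (ν k) hmem
    rw [ordS_hull V hVne] at h
    exact absurd h (not_le.mpr (hxk k))
  by_cases hbd : ∃ B : ℝ, {k : ℕ | L1 (fun i => (((ν k) i):ℝ)) ≤ B}.Infinite
  · -- Case A : infinitely many k with bounded normal
    obtain ⟨B, hinf⟩ := hbd
    have hmem𝒩 : ∀ k, L1 (fun i => (((ν k) i):ℝ)) ≤ B →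
        ν k ∈ Finset.Icc (fun _ : Fin n => -⌈B⌉) (fun _ => ⌈B⌉) := by
      intro k hk
      rw [Finset.mem_Icc]
      have hband : ∀ i : Fin n, |(ν k) i| ≤ ⌈B⌉ := by
        intro i
        have habs : |(((ν k) i):ℝ)| ≤ B := (abs_le_L1 _ i).trans hk
        have hB : B ≤ (⌈B⌉ : ℝ) := Int.le_ceil B
        have hcast : ((|((ν k) i)| : ℤ) : ℝ) ≤ ((⌈B⌉:ℤ):ℝ) := by
          rw [Int.cast_abs]
          exact habs.trans hB
        exact_mod_cast hcast
      constructor <;> (rw [Pi.le_def]; intro i)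
      · have := (abs_le.mp (hband i)).1; simpa using this
      · exact (abs_le.mp (hband i)).2
    obtain ⟨μ, hμinf⟩ : ∃ μ : Fin n → ℤ, {k : ℕ | ν k = μ}.Infinite := by
      by_contra hcon
      push_neg at hcon
      have hfin : ∀ μ : Fin n → ℤ, {k : ℕ | ν k = μ}.Finite :=
        fun μ => hcon μ
      have hsub : {k : ℕ | L1 (fun i => (((ν k) i):ℝ)) ≤ B} ⊆
          ⋃ μ ∈ ((Finset.Icc (fun _ : Fin n => -⌈B⌉) (fun _ => ⌈B⌉)) : Set (Fin n → ℤ)),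
            {k : ℕ | ν k = μ} := by
        intro k hk
        exact Set.mem_biUnion (by exact_mod_cast hmem𝒩 k hk) rfl
      exact hinf (((Set.Finite.biUnion (Finset.finite_toSet _) (fun μ _ => hfin μ))).subset hsub)
    obtain ⟨k₀, hk₀⟩ := hμinf.nonempty
    have hk₀' : ν k₀ = μ := hk₀
    have hμ0 : μ ≠ 0 := hk₀' ▸ hν0 k₀
    have hxμ : pairing x μ < mfun V hVne (fun i => ((μ i):ℝ)) + 1 := by
      have := hxk k₀; rwa [hk₀'] at this
    have hordμ : ordS (FineInterior (convexHull ℝ (V : Set (Fin n → ℝ)))) μ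
        ≠ mfun V hVne (fun i => ((μ i):ℝ)) + 1 := by
      have := hnotS k₀; rwa [hk₀'] at this
    have hdμ : pairing x μ - pairing x₀ μ < 0 := by
      have := hdneg k₀; rwa [hk₀'] at this
    have hzμ : pairing (γ ts) μ ≤ mfun V hVne (fun i => ((μ i):ℝ)) + 1 := by
      by_contra hgt
      push_neg at hgt
      set aμ : ℝ := mfun V hVne (fun i => ((μ i):ℝ)) + 1 with haμ
      set dμ : ℝ := pairing x μ - pairing x₀ μ with hdμdef
      set c : ℝ := pairing (γ ts) μ - aμ with hc
      have hcpos : 0 < c := by rw [hc]; linarith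
      obtain ⟨k, hkfib, hklarge⟩ := hμinf.exists_gt ⌈(1 - ts) * (-dμ) / c⌉₊
      have hkν : ν k = μ := hkfib
      have h2 : pairing (γ (tk k)) μ < aμ := by
        have := hνlt k; rwa [hkν] at this
      rw [hseg (tk k) μ] at h2
      have h3 : pairing (γ ts) μ = pairing x₀ μ + ts * dμ := hseg ts μ
      have hk1 : (0:ℝ) < (k:ℝ)+1 := by positivity
      have h4 : (1 - ts) * dμ < -c * ((k:ℝ)+1) := by
        have h2' : pairing x₀ μ + (ts + (1 - ts)/((k:ℝ)+1)) * dμ < aμ := by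
          have : tk k = ts + (1 - ts)/((k:ℝ)+1) := rfl
          rwa [this] at h2
        have hfrac : (1 - ts)/((k:ℝ)+1) * dμ < -c := by
          have : aμ = pairing (γ ts) μ - c := by rw [hc]; ring
          nlinarith [h2', h3]
        rw [div_mul_eq_mul_div, div_lt_iff₀ hk1] at hfrac
        linarith
      have h5 : (1 - ts) * (-dμ) / c ≤ ((⌈(1 - ts) * (-dμ) / c⌉₊ : ℕ) : ℝ) := Nat.le_ceil _
      have h6 : ((⌈(1 - ts) * (-dμ) / c⌉₊ : ℕ) : ℝ) < (k:ℝ) := by exact_mod_cast hklarge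
      have h7 : (1 - ts) * (-dμ) ≤ (k:ℝ) * c := by
        have := h5.trans h6.le
        rw [div_le_iff₀ hcpos] at this
        linarith
      nlinarith
    have hzμ' : mfun V hVne (fun i => ((μ i):ℝ)) + 1 ≤ pairing (γ ts) μ :=
      hFconstr μ hμ0 _ hzF
    have heqμ : pairing (γ ts) μ = mfun V hVne (fun i => ((μ i):ℝ)) + 1 :=
      le_antisymm hzμ hzμ'
    apply hordμ
    apply IsLeast.csInf_eq
    constructor
    · exact ⟨γ ts, hzF, heqμ⟩
    · rintro y ⟨w, hw, rfl⟩
      show _ ≤ pairing w μ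
      exact hFconstr μ hμ0 w hw
  · -- Case B : the normals blow up
    push_neg at hbd
    have hfinB : ∀ B : ℝ, {k : ℕ | L1 (fun i => (((ν k) i):ℝ)) ≤ B}.Finite :=
      fun B => hbd B
    set Lk : ℕ → ℝ := fun k => L1 (fun i => (((ν k) i):ℝ)) with hLk
    have hLpos : ∀ k, 0 < Lk k := fun k => lt_of_lt_of_le one_pos (hL1k k)
    have hLtop : Filter.Tendsto Lk Filter.atTop Filter.atTop := by
      rw [Filter.tendsto_atTop]
      intro B
      have hev := (hfinB B).eventually_cofinite_notMem
      rw [Nat.cofinite_eq_atTop] at hev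
      filter_upwards [hev] with k hk
      simp only [Set.mem_setOf_eq, not_le] at hk
      exact hk.le
    set η : ℕ → (Fin n → ℝ) := fun k => (Lk k)⁻¹ • (fun i => (((ν k) i):ℝ)) with hη
    have hηball : ∀ k, η k ∈ Metric.closedBall (0 : Fin n → ℝ) 1 := by
      intro k
      rw [mem_closedBall_iff_norm, sub_zero, pi_norm_le_iff_of_nonneg zero_le_one]
      intro i
      simp only [hη, Pi.smul_apply, smul_eq_mul, Real.norm_eq_abs, abs_mul,
        abs_of_nonneg (inv_nonneg.mpr (hLpos k).le)]
      rw [inv_mul_le_iff₀ (hLpos k), mul_one, hLk]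
      exact abs_le_L1 (fun i => (((ν k) i):ℝ)) i
    obtain ⟨ηl, hηlmem, φ, hφ, hηlim⟩ :=
      (isCompact_closedBall (0 : Fin n → ℝ) 1).tendsto_subseq hηball
    have hL1η : ∀ k, L1 (η k) = 1 := by
      intro k
      rw [hη]
      dsimp only
      rw [L1_smul _ (inv_nonneg.mpr (hLpos k).le)]
      rw [inv_mul_cancel₀ (hLpos k).ne']
    have hLηl : L1 ηl = 1 := by
      have h1 : Filter.Tendsto (fun j => L1 (η (φ j))) Filter.atTop (𝓝 (L1 ηl)) :=
        (continuous_L1.tendsto ηl).comp hηlim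
      have h2 : (fun j => L1 (η (φ j))) = fun _ => (1:ℝ) := funext fun j => hL1η (φ j)
      rw [h2] at h1
      exact (tendsto_nhds_unique tendsto_const_nhds h1).symm
    have hηl0 : ηl ≠ 0 := by
      intro h
      rw [h] at hLηl
      simp [L1] at hLηl
    have hineq : ∀ k, rpair (γ (tk k)) (η k) < mfun V hVne (η k) + (Lk k)⁻¹ := by
      intro k
      have h2 := hνlt k
      rw [pairing_eq_rpair] at h2
      have h3 : (Lk k)⁻¹ * rpair (γ (tk k)) (fun i => (((ν k) i):ℝ))
          < (Lk k)⁻¹ * (mfun V hVne (fun i => (((ν k) i):ℝ)) + 1) :=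
        mul_lt_mul_of_pos_left h2 (inv_pos.mpr (hLpos k))
      have h4 : rpair (γ (tk k)) (η k)
          = (Lk k)⁻¹ * rpair (γ (tk k)) (fun i => (((ν k) i):ℝ)) := by
        rw [hη]; dsimp only; rw [rpair_smul_right]
      have h5 : mfun V hVne (η k) = (Lk k)⁻¹ * mfun V hVne (fun i => (((ν k) i):ℝ)) := by
        rw [hη]; dsimp only; rw [mfun_smul V hVne _ (inv_nonneg.mpr (hLpos k).le)]
      rw [h4, h5]
      rw [mul_add, mul_one] at h3
      exact h3
    have httend : Filter.Tendsto tk Filter.atTop (𝓝 ts) := by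
      have h1 : Filter.Tendsto (fun k : ℕ => (1 - ts) * (1/((k:ℝ)+1))) Filter.atTop
          (𝓝 ((1-ts) * 0)) :=
        tendsto_const_nhds.mul tendsto_one_div_add_atTop_nhds_zero_nat
      have h2 : Filter.Tendsto (fun k : ℕ => ts + (1 - ts) * (1/((k:ℝ)+1))) Filter.atTop
          (𝓝 (ts + (1-ts) * 0)) := tendsto_const_nhds.add h1
      have h3 : tk = fun k : ℕ => ts + (1 - ts) * (1/((k:ℝ)+1)) := by
        funext k; rw [htk]; ring
      rw [h3]
      simpa using h2
    have hγtend : Filter.Tendsto (fun j => γ (tk (φ j))) Filter.atTop (𝓝 (γ ts)) :=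
      (hγcont.tendsto ts).comp (httend.comp hφ.tendsto_atTop)
    have hlhs : Filter.Tendsto (fun j => rpair (γ (tk (φ j))) (η (φ j))) Filter.atTop
        (𝓝 (rpair (γ ts) ηl)) := by
      have hc := continuous_rpair2.tendsto ((γ ts, ηl) : (Fin n → ℝ) × (Fin n → ℝ))
      exact hc.comp (hγtend.prodMk_nhds hηlim)
    have habsmfun : ∀ a b : Fin n → ℝ,
        |mfun V hVne a - mfun V hVne b| ≤ MV V hVne * L1 (a - b) := by
      intro a b
      rw [abs_sub_le_iff]
      constructor
      · linarith [mfun_sub_le V hVne a b]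
      · have h := mfun_sub_le V hVne b a
        rw [← neg_sub a b, L1_neg] at h
        linarith
    have hmtend : Filter.Tendsto (fun j => mfun V hVne (η (φ j))) Filter.atTop
        (𝓝 (mfun V hVne ηl)) := by
      rw [← tendsto_sub_nhds_zero_iff]
      apply squeeze_zero_norm (t₀ := Filter.atTop)
        (a := fun j => MV V hVne * L1 (η (φ j) - ηl))
      · intro j
        rw [Real.norm_eq_abs]
        exact habsmfun _ _
      · have h1 : Filter.Tendsto (fun j => η (φ j) - ηl) Filter.atTop (𝓝 0) := by
          rw [tendsto_sub_nhds_zero_iff]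
          exact hηlim
        have h2 : Filter.Tendsto (fun j => L1 (η (φ j) - ηl)) Filter.atTop (𝓝 (L1 0)) :=
          (continuous_L1.tendsto 0).comp h1
        have hL10 : L1 (0 : Fin n → ℝ) = 0 := by simp [L1]
        rw [hL10] at h2
        have := tendsto_const_nhds (x := MV V hVne) (f := Filter.atTop (α := ℕ)) |>.mul h2
        simpa using this
    have hinvtend : Filter.Tendsto (fun j => (Lk (φ j))⁻¹) Filter.atTop (𝓝 0) :=
      tendsto_inv_atTop_zero.comp (hLtop.comp hφ.tendsto_atTop)
    have hrhs : Filter.Tendsto (fun j => mfun V hVne (η (φ j)) + (Lk (φ j))⁻¹) Filter.atTop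
        (𝓝 (mfun V hVne ηl + 0)) := hmtend.add hinvtend
    have hle : rpair (γ ts) ηl ≤ mfun V hVne ηl + 0 :=
      le_of_tendsto_of_tendsto' hlhs hrhs fun j => (hineq (φ j)).le
    have hstrict := strict V hVne hzF hηl0
    rw [add_zero] at hle
    linarith

theorem fineInterior_canClosure' {n : ℕ}
    (V : Finset (Fin n → ℝ))
    (hfull : (interior (convexHull ℝ (V : Set (Fin n → ℝ)))).Nonempty)
    (hFfull : (interior (FineInterior (convexHull ℝ (V : Set (Fin n → ℝ))))).Nonempty) :
    FineInterior (CanClosure (convexHull ℝ (V : Set (Fin n → ℝ))))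
      = FineInterior (convexHull ℝ (V : Set (Fin n → ℝ))) := by
  have hVne : V.Nonempty := by
    rcases V.eq_empty_or_nonempty with h|h
    · exfalso
      rw [h] at hfull
      simp only [Finset.coe_empty, convexHull_empty, interior_empty] at hfull
      exact Set.not_nonempty_empty hfull
    · exact h
  obtain ⟨x₀, hx₀i⟩ := hFfull
  obtain ⟨ε, hεpos, hεball⟩ := Metric.mem_nhds_iff.mp (mem_interior_iff_mem_nhds.mp hx₀i)
  set ρ : ℝ := ε/2 with hρdef
  have hρ : 0 < ρ := by positivity
  have hball : Metric.closedBall x₀ ρ ⊆ FineInterior (convexHull ℝ (V : Set (Fin n → ℝ))) := by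
    intro y hy
    apply hεball
    rw [Metric.mem_ball]
    rw [Metric.mem_closedBall] at hy
    linarith
  set lam : ℝ := ρ/(1+ρ) with hlam
  have hlam0 : 0 < lam := by positivity
  have hlam1 : lam < 1 := by rw [hlam, div_lt_one (by positivity)]; linarith
  have hlamid : (1 - lam) * (1 + ρ) = 1 := by rw [hlam]; field_simp; ring
  have hsegp : ∀ (y : Fin n → ℝ) (t : ℝ) (μ : Fin n → ℤ),
      pairing (x₀ + t • (y - x₀)) μ = pairing x₀ μ + t * (pairing y μ - pairing x₀ μ) := by
    intro y t μ
    rw [pairing_eq_rpair, pairing_eq_rpair, pairing_eq_rpair]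
    exact rpair_seg x₀ y _ t
  have hscale : ∀ y ∈ CanClosure (convexHull ℝ (V : Set (Fin n → ℝ))),
      x₀ + lam • (y - x₀) ∈ FineInterior (convexHull ℝ (V : Set (Fin n → ℝ))) := by
    intro y hy
    apply key V hVne x₀ ρ hρ hball
    intro μ hμ
    have hμ0 : μ ≠ 0 := hμ.1
    have h1 : mfun V hVne (fun i => ((μ i):ℝ)) + 1 + ρ * L1 (fun i => ((μ i):ℝ))
        ≤ pairing x₀ μ := by
      apply margin hρ hball
      intro w hw
      have h := hw μ hμ0
      rwa [ordS_hull V hVne] at h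
    have h2 : mfun V hVne (fun i => ((μ i):ℝ)) ≤ pairing y μ := by
      have h := hy μ hμ
      rwa [ordS_hull V hVne] at h
    have hL := one_le_L1_int hμ0
    rw [ordS_hull V hVne, hsegp y lam μ]
    have hfa : (0:ℝ) ≤ 1 - lam := by linarith
    have hfb : 1 + ρ ≤ 1 + ρ * L1 (fun i => ((μ i):ℝ)) := by nlinarith
    have hfc : (1 - lam) * (1 + ρ) ≤ (1 - lam) * (1 + ρ * L1 (fun i => ((μ i):ℝ))) :=
      mul_le_mul_of_nonneg_left hfb hfa
    have hfd := mul_le_mul_of_nonneg_left h1 hfa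
    have hfe := mul_le_mul_of_nonneg_left h2 hlam0.le
    nlinarith [hfd, hfe, hfc, hlamid]
  have hΔsubC : convexHull ℝ (V : Set (Fin n → ℝ))
      ⊆ CanClosure (convexHull ℝ (V : Set (Fin n → ℝ))) := by
    intro w hw μ _
    rw [ordS_hull V hVne, pairing_eq_rpair]
    exact le_rpair_of_mem_hull V hVne hw _
  obtain ⟨v₀, hv₀⟩ := id hVne
  have hv₀C : v₀ ∈ CanClosure (convexHull ℝ (V : Set (Fin n → ℝ))) :=
    hΔsubC (subset_convexHull ℝ _ (by exact_mod_cast hv₀))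
  have hCne : ∀ μ : Fin n → ℤ,
      ((fun m => pairing m μ) '' CanClosure (convexHull ℝ (V : Set (Fin n → ℝ)))).Nonempty :=
    fun μ => ⟨pairing v₀ μ, v₀, hv₀C, rfl⟩
  have hordCle : ∀ ν : Fin n → ℤ, ν ≠ 0 →
      ordS (CanClosure (convexHull ℝ (V : Set (Fin n → ℝ)))) ν
        ≤ mfun V hVne (fun i => ((ν i):ℝ)) := by
    intro ν hν
    have hbdd : BddBelow ((fun m => pairing m ν) ''
        CanClosure (convexHull ℝ (V : Set (Fin n → ℝ)))) := by
      refine ⟨(mfun V hVne (fun i => ((ν i):ℝ)) + 1 - (1-lam) * pairing x₀ ν)/lam, ?_⟩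
      rintro y ⟨w, hw, rfl⟩
      show _ ≤ pairing w ν
      have hwF := hscale w hw
      have hval : mfun V hVne (fun i => ((ν i):ℝ)) + 1 ≤ pairing (x₀ + lam • (w - x₀)) ν := by
        have h := hwF ν hν
        rwa [ordS_hull V hVne] at h
      rw [hsegp w lam ν] at hval
      rw [div_le_iff₀ hlam0]
      nlinarith [hval]
    obtain ⟨v, hv, hveq⟩ := exists_mfun V hVne (fun i => ((ν i):ℝ))
    have hmem : mfun V hVne (fun i => ((ν i):ℝ)) ∈ (fun m => pairing m ν) ''
        CanClosure (convexHull ℝ (V : Set (Fin n → ℝ))) := by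
      refine ⟨v, hΔsubC (subset_convexHull ℝ _ (by exact_mod_cast hv)), ?_⟩
      show pairing v ν = _
      rw [pairing_eq_rpair, ← hveq]
    exact csInf_le hbdd hmem
  have hordCge : ∀ μ ∈ SuppF (convexHull ℝ (V : Set (Fin n → ℝ))),
      mfun V hVne (fun i => ((μ i):ℝ))
        ≤ ordS (CanClosure (convexHull ℝ (V : Set (Fin n → ℝ)))) μ := by
    intro μ hμ
    apply le_csInf (hCne μ)
    rintro y ⟨w, hw, rfl⟩
    show _ ≤ pairing w μ
    have h := hw μ hμ
    rwa [ordS_hull V hVne] at h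
  ext x
  constructor
  · intro hxFC
    apply key V hVne x₀ ρ hρ hball
    intro μ hμ
    have h1 := hxFC μ hμ.1
    have h2 := hordCge μ hμ
    rw [ordS_hull V hVne]
    linarith
  · intro hxF
    intro ν hν
    have h1 := hordCle ν hν
    have h2 := hxF ν hν
    rw [ordS_hull V hVne] at h2
    linarith


end FCaux

/-- The canonical closure has the same Fine interior as the original polytope:
for a full-dimensional lattice polytope `Δ` with `dim F(Δ) = dim Δ`
(i.e. the Fine interior is also full-dimensional), `F(C(Δ)) = F(Δ)`. -/
theorem fineInterior_canClosure {n : ℕ}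
    (V : Finset (Fin n → ℝ)) (hV : ∀ v ∈ V, IsLatticePoint v)
    (Δ : Set (Fin n → ℝ)) (hΔ : Δ = convexHull ℝ (V : Set (Fin n → ℝ)))
    (hfull : (interior Δ).Nonempty)
    (hFfull : (interior (FineInterior Δ)).Nonempty) :
    FineInterior (CanClosure Δ) = FineInterior Δ := by
  subst hΔ
  exact FCaux.fineInterior_canClosure' V hfull hFfull
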